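/- arXiv:2305.11400 — 3 statements merged into one kernel-verified Lean document; each statement's English description precedes it below -/
import Mathlib

section
/- Let E be a real normed vector space and let f, g : E → ℝ be differentiable, strictly convex functions. Suppose a ∈ E is a global minimizer of f, b ∈ E is a global minimizer of g, and a ≠ b. Fix α ∈ (0,1) and define h : E → ℝ by h(θ) = α·f(θ) + (1−α)·g(θ). If θ* ∈ E is a global minimizer of h, then f(θ*) > f(a). -/
/-- Paper's Theorem 1: if `θ*` globally minimizes the mixture loss
`h θ = α * f θ + (1 - α) * g θ` of two differentiable strictly convex losses with
distinct global minimizers, then `θ*` is strictly suboptimal for the source loss `f`. -/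
theorem mixture_minimizer_strictly_suboptimal_for_source
    {E : Type*} [NormedAddCommGroup E] [NormedSpace ℝ E]
    (f g : E → ℝ) (hfd : Differentiable ℝ f) (hgd : Differentiable ℝ g)
    (hfc : StrictConvexOn ℝ Set.univ f) (hgc : StrictConvexOn ℝ Set.univ g)
    (a b : E) (ha : ∀ θ : E, f a ≤ f θ) (hb : ∀ θ : E, g b ≤ g θ) (hab : a ≠ b)
    (α : ℝ) (hα : α ∈ Set.Ioo (0 : ℝ) 1)
    (h : E → ℝ) (hdef : ∀ θ : E, h θ = α * f θ + (1 - α) * g θ)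
    (θs : E) (hθs : ∀ θ : E, h θs ≤ h θ) :
    f θs > f a := by
  obtain ⟨hα0, hα1⟩ := hα
  by_contra hle
  push_neg at hle
  have hfsa : f θs = f a := le_antisymm hle (ha θs)
  -- θs = a by uniqueness of the strict-convex minimizer
  have hθsa : θs = a := by
    refine hfc.eq_of_isMinOn ?_ ?_ (Set.mem_univ _) (Set.mem_univ _)
    · intro x _; exact hfsa ▸ ha x
    · intro x _; exact ha x
  have hθsa' : a = θs := hθsa.symm
  subst hθsa'
  -- g a > g b
  have hgab : g b < g a := by
    rcases lt_or_eq_of_le (hb a) with h' | h'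
    · exact h'
    · exfalso
      have := hgc.eq_of_isMinOn (fun x _ => h' ▸ hb x) (fun x _ => hb x)
        (Set.mem_univ a) (Set.mem_univ b)
      exact hab this
  set c : ℝ := g a - g b with hc
  have hcpos : 0 < c := sub_pos.mpr hgab
  -- derivative of f at a is 0
  have hfmin : IsLocalMin f a := Filter.Eventually.of_forall ha
  have hf0 : fderiv ℝ f a = 0 := hfmin.fderiv_eq_zero
  -- ψ t = f (a + t • (b - a)) has derivative 0 at 0
  set ψ : ℝ → ℝ := fun t => f (a + t • (b - a)) with hψ
  have hL : HasDerivAt (fun t : ℝ => a + t • (b - a)) (b - a) 0 := by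
    simpa using (hasDerivAt_id (0:ℝ)).smul_const (b - a) |>.const_add a
  have hψd : HasDerivAt ψ 0 0 := by
    have hF : HasFDerivAt f (0 : E →L[ℝ] ℝ) (a + (0:ℝ) • (b - a)) := by
      simpa [hf0] using (hfd (a + (0:ℝ) • (b - a))).hasFDerivAt
    have hc0 := hF.comp_hasDerivAt 0 hL
    simp only [ContinuousLinearMap.zero_apply] at hc0
    exact hc0
  -- slope tends to 0
  have hslope := hasDerivAt_iff_tendsto_slope.mp hψd
  have hε : (0:ℝ) < (1 - α) * c / α := div_pos (mul_pos (by linarith) hcpos) hα0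
  have hev : ∀ᶠ t in nhdsWithin (0:ℝ) (Set.Ioi 0),
      slope ψ 0 t < (1 - α) * c / α := by
    have := hslope.mono_left (nhdsWithin_mono 0 (by
      intro x hx; exact ne_of_gt hx : Set.Ioi (0:ℝ) ⊆ {0}ᶜ))
    exact this (Iio_mem_nhds hε)
  have hev2 : ∀ᶠ t in nhdsWithin (0:ℝ) (Set.Ioi 0), t < 1 :=
    eventually_nhdsWithin_of_eventually_nhds (Filter.Tendsto.eventually_lt_const
      one_pos (Filter.tendsto_id) |>.mono (fun x hx => hx))
  obtain ⟨t, ⟨⟨hts, ht1⟩, htpos⟩⟩ :=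
    ((hev.and hev2).and self_mem_nhdsWithin).exists
  have htpos : (0:ℝ) < t := htpos
  -- from slope bound
  have hψt : α * (ψ t - ψ 0) < t * ((1 - α) * c) := by
    have : slope ψ 0 t = (ψ t - ψ 0) / t := by
      simp [slope, sub_zero, inv_mul_eq_div]
    rw [this] at hts
    have h1 : (ψ t - ψ 0) / t * α < (1 - α) * c / α * α :=
      mul_lt_mul_of_pos_right hts hα0
    rw [div_mul_cancel₀ _ (ne_of_gt hα0)] at h1
    have h2 : (ψ t - ψ 0) / t * α * t < (1 - α) * c * t :=
      mul_lt_mul_of_pos_right h1 htpos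
    calc α * (ψ t - ψ 0) = (ψ t - ψ 0) / t * α * t := by
          field_simp
      _ < (1 - α) * c * t := h2
      _ = t * ((1 - α) * c) := by ring
  -- convexity of g along the segment
  have hgseg : g (a + t • (b - a)) ≤ (1 - t) * g a + t * g b := by
    have hconv := hgc.convexOn.2 (Set.mem_univ a) (Set.mem_univ b)
      (by linarith : (0:ℝ) ≤ 1 - t) (le_of_lt htpos) (by ring)
    have : a + t • (b - a) = (1 - t) • a + t • b := by
      rw [smul_sub, sub_smul, one_smul]; abel
    rw [this]
    simpa [smul_eq_mul] using hconv
  -- contradiction with minimality of h at a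
  have hmin := hθs (a + t • (b - a))
  rw [hdef, hdef] at hmin
  have hψ0 : ψ 0 = f a := by simp [hψ]
  have hψtdef : ψ t = f (a + t • (b - a)) := rfl
  rw [hψ0, hψtdef, hc] at hψt
  have hg2 : (1 - α) * g (a + t • (b - a)) ≤ (1 - α) * ((1 - t) * g a + t * g b) :=
    mul_le_mul_of_nonneg_left hgseg (by linarith)
  nlinarith [hψt, hg2, hmin]
end

section
/- Let E be a real normed vector space and let f, g : E → ℝ be differentiable, strictly convex functions. Suppose a ∈ E is a global minimizer of f, b ∈ E is a global minimizer of g, and a ≠ b. Fix α ∈ (0,1) and define h : E → ℝ by h(θ) = α·f(θ) + (1−α)·g(θ). If θ* ∈ E is a global minimizer of h, then g(θ*) > g(b). -/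
open Filter Set Topology

/-- Gradient inequality: a convex differentiable function lies above its tangent. -/
lemma convexOn_grad_ineq {E : Type*} [NormedAddCommGroup E] [NormedSpace ℝ E]
    {f : E → ℝ} {f' : E →L[ℝ] ℝ} (hc : ConvexOn ℝ Set.univ f) {x : E}
    (hf : HasFDerivAt f f' x) (y : E) : f' (y - x) ≤ f y - f x := by
  set v := y - x with hv
  have h1 : HasDerivAt (fun t : ℝ => x + t • v) v 0 := by
    simpa using ((hasDerivAt_id (0 : ℝ)).smul_const v).const_add x
  have hline : HasDerivAt (fun t : ℝ => f (x + t • v)) (f' v) 0 := by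
    have h2 : HasFDerivAt f f' (x + (0:ℝ) • v) := by simpa using hf
    simpa [Function.comp_def] using h2.comp_hasDerivAt 0 h1
  have htend : Tendsto (slope (fun t : ℝ => f (x + t • v)) 0) (𝓝[>] 0) (𝓝 (f' v)) :=
    (hasDerivAt_iff_tendsto_slope.mp hline).mono_left
      (nhdsWithin_mono _ fun t ht => ne_of_gt ht)
  refine le_of_tendsto htend ?_
  filter_upwards [Ioo_mem_nhdsGT_of_mem (by norm_num : (0:ℝ) ∈ Ico (0:ℝ) 1)] with t ht
  obtain ⟨ht0, ht1⟩ := ht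
  have hxy : x + t • v = (1 - t) • x + t • y := by
    rw [hv]; module
  have hcv := hc.2 (mem_univ x) (mem_univ y) (by linarith : (0:ℝ) ≤ 1 - t) ht0.le
    (by ring : (1 - t) + t = 1)
  have key : f (x + t • v) - f x ≤ t * (f y - f x) := by
    rw [hxy]
    simp only [smul_eq_mul] at hcv
    nlinarith
  have h0 : f (x + (0:ℝ) • v) = f x := by norm_num
  rw [slope_def_field, h0, sub_zero, div_le_iff₀ ht0]
  nlinarith

/-- Symmetric counterpart of the paper's Theorem 1: the global minimizer `θ*` of the
mixture loss `h θ = α * f θ + (1 - α) * g θ` is strictly suboptimal for the target loss `g`. -/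
theorem mixture_minimizer_strictly_suboptimal_for_target
    {E : Type*} [NormedAddCommGroup E] [NormedSpace ℝ E]
    (f g : E → ℝ) (hfd : Differentiable ℝ f) (hgd : Differentiable ℝ g)
    (hfc : StrictConvexOn ℝ Set.univ f) (hgc : StrictConvexOn ℝ Set.univ g)
    (a b : E) (ha : ∀ θ : E, f a ≤ f θ) (hb : ∀ θ : E, g b ≤ g θ) (hab : a ≠ b)
    (α : ℝ) (hα : α ∈ Set.Ioo (0 : ℝ) 1)
    (h : E → ℝ) (hdef : ∀ θ : E, h θ = α * f θ + (1 - α) * g θ)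
    (θs : E) (hθs : ∀ θ : E, h θs ≤ h θ) :
    g θs > g b := by
  obtain ⟨hα0, hα1⟩ := hα
  by_contra hcon
  push_neg at hcon
  have hgeq : g θs = g b := le_antisymm hcon (hb θs)
  -- uniqueness of the minimizer of g: θs = b
  have hθsb : θs = b := by
    by_contra hne
    have hmid := hgc.2 (mem_univ θs) (mem_univ b) hne (by norm_num : (0:ℝ) < 1/2)
      (by norm_num : (0:ℝ) < 1/2) (by norm_num)
    rw [hgeq] at hmid
    simp only [smul_eq_mul] at hmid
    have := hb ((1/2 : ℝ) • θs + (1/2 : ℝ) • b)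
    nlinarith
  subst hθsb
  -- now `b` has been replaced by `θs`
  -- f a < f b
  have hfab : f a < f θs := by
    have hmid := hfc.2 (mem_univ a) (mem_univ θs) hab (by norm_num : (0:ℝ) < 1/2)
      (by norm_num : (0:ℝ) < 1/2) (by norm_num)
    simp only [smul_eq_mul] at hmid
    have := ha ((1/2 : ℝ) • a + (1/2 : ℝ) • θs)
    nlinarith
  -- derivatives vanish at b
  have hgz : fderiv ℝ g θs = 0 :=
    (IsMinOn.isLocalMin (isMinOn_univ_iff.mpr hb) univ_mem).fderiv_eq_zero
  have hhderiv : HasFDerivAt h (α • fderiv ℝ f θs + (1 - α) • fderiv ℝ g θs) θs := by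
    have : HasFDerivAt (fun θ => α * f θ + (1 - α) * g θ)
        (α • fderiv ℝ f θs + (1 - α) • fderiv ℝ g θs) θs :=
      ((hfd θs).hasFDerivAt.const_mul α).add ((hgd θs).hasFDerivAt.const_mul (1 - α))
    exact this.congr_of_eventuallyEq (Eventually.of_forall fun θ => (hdef θ))
  have hhz : fderiv ℝ h θs = 0 :=
    (IsMinOn.isLocalMin (isMinOn_univ_iff.mpr hθs) univ_mem).fderiv_eq_zero
  have hfz : fderiv ℝ f θs = 0 := by
    have := hhderiv.fderiv
    rw [hhz, hgz, smul_zero, add_zero] at this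
    have hα0' : α ≠ 0 := ne_of_gt hα0
    have := this.symm
    rwa [smul_eq_zero, or_iff_right hα0'] at this
  -- gradient inequality contradiction
  have := convexOn_grad_ineq hfc.convexOn (hfd θs).hasFDerivAt a
  rw [hfz] at this
  simp at this
  linarith
end

section
/- Let X be a measurable space, let μ_a and μ_b be probability measures on X, let E be a real normed vector space, and let l : X × E → ℝ be such that for every θ ∈ E the function x ↦ l(x, θ) is integrable with respect to both μ_a and μ_b. Define L_a(θ) = ∫ l(x, θ) dμ_a(x), L_b(θ) = ∫ l(x, θ) dμ_b(x), and, for a fixed α ∈ (0,1), define L_n(θ) = ∫ l(x, θ) d(α·μ_a + (1−α)·μ_b)(x). Assume L_a and L_b are differentiable and strictly convex, that a ∈ E is a global minimizer of L_a, that b ∈ E is a global minimizer of L_b, and that a ≠ b. If θ* ∈ E is a global minimizer of L_n, then L_a(θ*) > L_a(a). -/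
open MeasureTheory

/-- The paper's Theorem 1 in its original expectation form: `L_a`, `L_b`, `L_n` are the
expected losses with respect to the source distribution `μa`, the target distribution
`μb`, and the mixture `α • μa + (1 - α) • μb`; if `θ*` globally minimizes the mixture
loss `L_n`, then it is strictly suboptimal for the source loss `L_a`. -/
theorem mixture_expected_loss_minimizer_strictly_suboptimal_for_source
    {X : Type*} [MeasurableSpace X] (μa μb : Measure X)
    [IsProbabilityMeasure μa] [IsProbabilityMeasure μb]
    {E : Type*} [NormedAddCommGroup E] [NormedSpace ℝ E]
    (l : X × E → ℝ)
    (hla : ∀ θ : E, Integrable (fun x => l (x, θ)) μa)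
    (hlb : ∀ θ : E, Integrable (fun x => l (x, θ)) μb)
    (La Lb : E → ℝ)
    (hLa : ∀ θ : E, La θ = ∫ x, l (x, θ) ∂μa)
    (hLb : ∀ θ : E, Lb θ = ∫ x, l (x, θ) ∂μb)
    (α : ℝ) (hα : α ∈ Set.Ioo (0 : ℝ) 1)
    (Ln : E → ℝ)
    (hLn : ∀ θ : E,
      Ln θ = ∫ x, l (x, θ) ∂(ENNReal.ofReal α • μa + ENNReal.ofReal (1 - α) • μb))
    (hLad : Differentiable ℝ La) (hLbd : Differentiable ℝ Lb)
    (hLac : StrictConvexOn ℝ Set.univ La) (hLbc : StrictConvexOn ℝ Set.univ Lb)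
    (a b : E) (ha : ∀ θ : E, La a ≤ La θ) (hb : ∀ θ : E, Lb b ≤ Lb θ) (hab : a ≠ b)
    (θs : E) (hθs : ∀ θ : E, Ln θs ≤ Ln θ) :
    La θs > La a := by
  obtain ⟨hα0, hα1⟩ := hα
  have hα1' : (0:ℝ) < 1 - α := by linarith
  -- Step 1: mixture decomposition of `Ln`
  have hmix : ∀ θ : E, Ln θ = α * La θ + (1 - α) * Lb θ := by
    intro θ
    rw [hLn, hLa, hLb,
      integral_add_measure ((hla θ).smul_measure ENNReal.ofReal_ne_top)
        ((hlb θ).smul_measure ENNReal.ofReal_ne_top),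
      integral_smul_measure, integral_smul_measure,
      ENNReal.toReal_ofReal hα0.le, ENNReal.toReal_ofReal hα1'.le, smul_eq_mul, smul_eq_mul]
  by_contra hcon
  push_neg at hcon
  have hs : La θs = La a := le_antisymm hcon (ha θs)
  -- Step 2: by strict convexity, `θs = a`
  have hθa : θs = a := by
    by_contra hne
    have h2 := hLac.2 (Set.mem_univ θs) (Set.mem_univ a) hne
      (by norm_num : (0:ℝ) < 1/2) (by norm_num : (0:ℝ) < 1/2) (by norm_num)
    have h3 := ha ((1/2 : ℝ) • θs + (1/2 : ℝ) • a)
    rw [smul_eq_mul, smul_eq_mul, hs] at h2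
    linarith
  subst hθa
  -- Step 3: derivatives at the minimizers vanish
  have hminLn : IsLocalMin Ln θs := Filter.Eventually.of_forall hθs
  have hminLa : IsLocalMin La θs := Filter.Eventually.of_forall fun θ => hs ▸ ha θ
  have hfa : fderiv ℝ La θs = 0 := hminLa.fderiv_eq_zero
  have hLnd : HasFDerivAt Ln
      (α • fderiv ℝ La θs + (1 - α) • fderiv ℝ Lb θs) θs := by
    have : HasFDerivAt (fun θ => α * La θ + (1 - α) * Lb θ)
        (α • fderiv ℝ La θs + (1 - α) • fderiv ℝ Lb θs) θs :=
      ((hLad θs).hasFDerivAt.const_mul α).add ((hLbd θs).hasFDerivAt.const_mul (1 - α))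
    exact (funext hmix : Ln = _) ▸ this
  have hfb : fderiv ℝ Lb θs = 0 := by
    have h0 : α • fderiv ℝ La θs + (1 - α) • fderiv ℝ Lb θs = 0 := by
      rw [← hLnd.fderiv]; exact hminLn.fderiv_eq_zero
    rw [hfa, smul_zero, zero_add, smul_eq_zero] at h0
    exact h0.resolve_left (by intro h; linarith)
  -- Step 4: along the segment from `θs` to `b`, `Lb` is convex with zero derivative at 0
  set g : ℝ → ℝ := fun t => Lb (AffineMap.lineMap θs b t) with hgdef
  have hgc : ConvexOn ℝ Set.univ g := by
    have := hLbc.convexOn.comp_affineMap (AffineMap.lineMap θs b)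
    exact this
  have hline : HasDerivAt (fun t : ℝ => AffineMap.lineMap θs b t) (b - θs) (0:ℝ) := by
    simp only [AffineMap.lineMap_apply_module']
    simpa using ((hasDerivAt_id (0:ℝ)).smul_const (b - θs)).add_const θs
  have hg0 : HasDerivAt g ((fderiv ℝ Lb (AffineMap.lineMap θs b (0:ℝ))) (b - θs)) 0 :=
    (hLbd _).hasFDerivAt.comp_hasDerivAt 0 hline
  rw [AffineMap.lineMap_apply_zero, hfb] at hg0
  have hslope : (0:ℝ) ≤ slope g 0 1 :=
    hgc.le_slope_of_hasDerivAt (Set.mem_univ 0) (Set.mem_univ 1) one_pos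
      (by simpa using hg0)
  rw [slope_def_field] at hslope
  have hg1 : g 1 = Lb b := by rw [hgdef]; simp
  have hg0' : g 0 = Lb θs := by rw [hgdef]; simp
  have hba : Lb θs ≤ Lb b := by
    rw [hg1, hg0'] at hslope
    have : (0:ℝ) ≤ Lb b - Lb θs := by
      have h10 : (1:ℝ) - 0 = 1 := by norm_num
      rw [h10, div_one] at hslope
      exact hslope
    linarith
  -- Step 5: two distinct minimizers of the strictly convex `Lb`: contradiction
  have heq : Lb θs = Lb b := le_antisymm hba (hb θs)
  have h2 := hLbc.2 (Set.mem_univ θs) (Set.mem_univ b) hab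
    (by norm_num : (0:ℝ) < 1/2) (by norm_num : (0:ℝ) < 1/2) (by norm_num)
  have h3 := hb ((1/2 : ℝ) • θs + (1/2 : ℝ) • b)
  rw [smul_eq_mul, smul_eq_mul, heq] at h2
  linarith
end
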